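/- There exists a continuous probability density π : ℝ → [0,1] whose unique maximizer is θ = 0, and a sequence c^ν → ∞ such that for every ν, every maximizer of θ ↦ ∫_{|z−θ| < 1/c^ν} π(z) dz lies outside (−1/2, 1/2). In particular, the sequence of Bayes estimators with 0-1 loss of radius 1/c^ν does not converge to the MAP estimator. -/

import Mathlib

open MeasureTheory Filter Topology Metric Set
open scoped ENNReal NNReal

noncomputable section

namespace Stmt16

def rr (ν : ℕ) : ℝ := ((1:ℝ)/4)^ν / 2
def mm (ν : ℕ) : ℝ := 16 * (4:ℝ)^ν
def ww (ν : ℕ) : ℝ := rr ν + ((1:ℝ)/16)^ν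

def S : Set ℝ := Ioo (-1) 1 ∪ ⋃ ν, Ioo (mm ν - ww ν) (mm ν + ww ν)

def q (z : ℝ) : ℝ := |z| / (64 * (1 + z^4))
def A (z : ℝ) : ℝ := 1/8 - q z
def ψ (z : ℝ) : ℝ := min (A z) ((1 + z^2) * infDist z Sᶜ)

lemma rr_pos (ν : ℕ) : 0 < rr ν := by unfold rr; positivity
lemma rr_le (ν : ℕ) : rr ν ≤ 1/2 := by
  have : ((1:ℝ)/4)^ν ≤ 1 := pow_le_one₀ (by norm_num) (by norm_num)
  simp only [rr]; linarith
lemma ww_pos (ν : ℕ) : 0 < ww ν := by have := rr_pos ν; have : (0:ℝ) < ((1:ℝ)/16)^ν := by positivity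
                                      unfold ww; have := rr_pos ν; linarith
lemma ww_le (ν : ℕ) : ww ν ≤ 3/2 := by
  have h1 := rr_le ν
  have h2 : ((1:ℝ)/16)^ν ≤ 1 := pow_le_one₀ (by norm_num) (by norm_num)
  unfold ww; linarith
lemma one_le_pow4 (ν : ℕ) : (1:ℝ) ≤ (4:ℝ)^ν := one_le_pow₀ (by norm_num)

lemma q_nonneg (z : ℝ) : 0 ≤ q z := by
  unfold q; positivity
lemma q_pos {z : ℝ} (hz : z ≠ 0) : 0 < q z := by
  unfold q
  have : 0 < |z| := abs_pos.2 hz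
  positivity
lemma q_le (z : ℝ) : q z ≤ 1/64 := by
  unfold q
  rw [div_le_iff₀ (by positivity)]
  have h : |z| ≤ 1 + z^4 := by
    have habs : 0 ≤ |z| := abs_nonneg z
    have h4 : z^4 = |z|^4 := by rw [← abs_pow]; rw [abs_of_nonneg (by positivity)]
    rw [h4]
    rcases le_or_gt (|z|) 1 with h | h
    · nlinarith [pow_nonneg habs 4]
    · have h2 : |z| ≤ |z|^2 := by nlinarith
      have h3 : |z|^2 ≤ |z|^4 := by nlinarith
      nlinarith
  linarith
lemma A_le (z : ℝ) : A z ≤ 1/8 := by have := q_nonneg z; unfold A; linarith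
lemma A_nonneg (z : ℝ) : 0 ≤ A z := by have := q_le z; unfold A; linarith

lemma S_open : IsOpen S := by
  refine (isOpen_Ioo).union (isOpen_iUnion fun ν => isOpen_Ioo)

lemma two_not_mem_S : (2:ℝ) ∉ S := by
  intro h
  rcases h with h | h
  · exact absurd h.2 (by norm_num)
  · rcases mem_iUnion.1 h with ⟨ν, hν⟩
    have h1 := ww_le ν
    have h2 : (16:ℝ) ≤ mm ν := by
      have := one_le_pow4 ν; unfold mm; nlinarith
    have := hν.1
    linarith

lemma compl_nonempty : (Sᶜ : Set ℝ).Nonempty := ⟨2, two_not_mem_S⟩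

lemma le_infDist' {x b : ℝ} (h : ∀ y, dist x y < b → y ∈ S) :
    b ≤ infDist x Sᶜ := by
  by_contra hlt
  push_neg at hlt
  rcases (infDist_lt_iff compl_nonempty).1 hlt with ⟨y, hy, hd⟩
  exact hy (h y hd)

lemma psi_nonneg (z : ℝ) : 0 ≤ ψ z :=
  le_min (A_nonneg z) (mul_nonneg (by positivity) infDist_nonneg)
lemma psi_le (z : ℝ) : ψ z ≤ 1/8 := (min_le_left _ _).trans (A_le z)
lemma psi_eq_zero {z : ℝ} (hz : z ∉ S) : ψ z = 0 := by
  have : infDist z Sᶜ = 0 := infDist_zero_of_mem hz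
  simp [ψ, this, A_nonneg z]
lemma psi_cont : Continuous ψ := by
  have hq : Continuous q := by
    apply Continuous.div (continuous_abs)
    · continuity
    · intro z; positivity
  exact ((continuous_const.sub hq)).min
    ((continuous_const.add (continuous_pow 2)).mul (continuous_infDist_pt _))



lemma volume_S_le : volume S ≤ ENNReal.ofReal 6 := by
  have h1 : volume S ≤ volume (Ioo (-1:ℝ) 1) + volume (⋃ ν, Ioo (mm ν - ww ν) (mm ν + ww ν)) :=
    measure_union_le _ _
  have h2 : volume (⋃ ν, Ioo (mm ν - ww ν) (mm ν + ww ν)) ≤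
      ∑' ν, volume (Ioo (mm ν - ww ν) (mm ν + ww ν)) := measure_iUnion_le _
  have h3 : ∀ ν, volume (Ioo (mm ν - ww ν) (mm ν + ww ν)) ≤ ENNReal.ofReal (3 * ((1:ℝ)/4)^ν) := by
    intro ν
    rw [Real.volume_Ioo]
    apply ENNReal.ofReal_le_ofReal
    have h16 : ((1:ℝ)/16)^ν ≤ ((1:ℝ)/4)^ν := pow_le_pow_left₀ (by norm_num) (by norm_num) ν
    unfold ww rr; ring_nf; nlinarith [pow_nonneg (show (0:ℝ) ≤ 1/4 by norm_num) ν]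
  have h4 : ∑' ν, volume (Ioo (mm ν - ww ν) (mm ν + ww ν)) ≤
      ∑' ν : ℕ, ENNReal.ofReal (3 * ((1:ℝ)/4)^ν) := ENNReal.tsum_le_tsum h3
  have hsum : Summable (fun ν : ℕ => 3 * ((1:ℝ)/4)^ν) :=
    (summable_geometric_of_lt_one (by norm_num) (by norm_num)).mul_left 3
  have h5 : ∑' ν : ℕ, ENNReal.ofReal (3 * ((1:ℝ)/4)^ν) = ENNReal.ofReal (∑' ν : ℕ, 3 * ((1:ℝ)/4)^ν) := by
    rw [ENNReal.ofReal_tsum_of_nonneg (fun ν => by positivity) hsum]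
  have h6 : ∑' ν : ℕ, 3 * ((1:ℝ)/4)^ν = 4 := by
    rw [tsum_mul_left, tsum_geometric_of_lt_one (by norm_num) (by norm_num)]
    norm_num
  calc volume S ≤ _ := h1
    _ ≤ ENNReal.ofReal 2 + ENNReal.ofReal 4 := by
        refine add_le_add ?_ ((h2.trans h4).trans_eq (by rw [h5, h6]))
        rw [Real.volume_Ioo]; exact ENNReal.ofReal_le_ofReal (by norm_num)
    _ = ENNReal.ofReal 6 := by rw [← ENNReal.ofReal_add] <;> norm_num

lemma volume_S_lt_top : volume S < ⊤ := volume_S_le.trans_lt (by simp)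

def bd : ℝ → ℝ := S.indicator (fun _ => 1/8)

lemma bd_integrable : Integrable bd := by
  rw [bd, integrable_indicator_iff S_open.measurableSet]
  exact integrableOn_const volume_S_lt_top.ne (by simp)

lemma psi_le_bd (z : ℝ) : ψ z ≤ bd z := by
  by_cases hz : z ∈ S
  · rw [bd, indicator_of_mem hz]; exact psi_le z
  · rw [bd, indicator_of_notMem hz]; exact (psi_eq_zero hz).le

lemma psi_integrable : Integrable ψ := by
  refine Integrable.mono' bd_integrable psi_cont.aestronglyMeasurable ?_
  filter_upwards with z
  rw [Real.norm_eq_abs, abs_of_nonneg (psi_nonneg z)]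
  exact psi_le_bd z

def M : ℝ := ∫ z, ψ z

lemma M_nonneg : 0 ≤ M := integral_nonneg psi_nonneg

lemma M_le : M ≤ 3/4 := by
  have h1 : M ≤ ∫ z, bd z := integral_mono psi_integrable bd_integrable psi_le_bd
  have h2 : ∫ z, bd z = (volume S).toReal * (1/8) := by
    rw [bd, integral_indicator S_open.measurableSet]
    simp [Measure.restrict_apply]
    rfl
  have h3 : (volume S).toReal ≤ 6 := by
    have := ENNReal.toReal_mono (by simp) volume_S_le
    simpa using this
  rw [h2] at h1
  nlinarith [ENNReal.toReal_nonneg (a := volume S)]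

def b2 : ℝ := 1 / (256 * (1 - M))
def LL : ℝ := 16 * (1 - M)
def x0 : ℝ := -2 - LL
def comp (z : ℝ) : ℝ := max 0 (1/16 - b2 * |z - x0|)

lemma oneM_pos : (0:ℝ) < 1 - M := by have := M_le; linarith
lemma b2_pos : 0 < b2 := by unfold b2; have := oneM_pos; positivity
lemma LL_pos : 0 < LL := by unfold LL; have := oneM_pos; positivity
lemma b2_LL : b2 * LL = 1/16 := by
  have h' : (1 - M) ≠ 0 := ne_of_gt oneM_pos
  unfold b2 LL; field_simp; ring
lemma comp_nonneg (z : ℝ) : 0 ≤ comp z := le_max_left _ _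
lemma comp_le (z : ℝ) : comp z ≤ 1/16 := by
  have h : b2 * |z - x0| ≥ 0 := mul_nonneg b2_pos.le (abs_nonneg _)
  unfold comp
  apply max_le <;> linarith
lemma comp_eq_zero {z : ℝ} (hz : -2 ≤ z) : comp z = 0 := by
  have hL := LL_pos
  have h1 : LL ≤ |z - x0| := by
    rw [x0]; rw [abs_of_nonneg (by linarith)]; linarith
  have h2 : b2 * LL ≤ b2 * |z - x0| := mul_le_mul_of_nonneg_left h1 b2_pos.le
  rw [b2_LL] at h2
  unfold comp
  rw [max_eq_left (by linarith)]
lemma comp_cont : Continuous comp :=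
  continuous_const.max (continuous_const.sub (continuous_const.mul
    ((continuous_id.sub continuous_const).abs)))

lemma comp_support {z : ℝ} (hz : z ∉ Icc (x0 - LL) (x0 + LL)) : comp z = 0 := by
  have hL := LL_pos
  have h1 : LL < |z - x0| := by
    simp only [mem_Icc, not_and_or, not_le] at hz
    rcases hz with h | h
    · rw [abs_of_nonpos (by linarith)]; linarith
    · rw [abs_of_nonneg (by linarith)]; linarith
  have h2 : b2 * LL ≤ b2 * |z - x0| := mul_le_mul_of_nonneg_left h1.le b2_pos.le
  rw [b2_LL] at h2
  unfold comp
  rw [max_eq_left (by linarith)]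

lemma comp_integrable : Integrable comp := by
  apply Continuous.integrable_of_hasCompactSupport comp_cont
  apply HasCompactSupport.intro (isCompact_Icc (a := x0 - LL) (b := x0 + LL))
  intro z hz
  exact comp_support hz



lemma hasDerivAt_half_mul_abs (x : ℝ) : HasDerivAt (fun u : ℝ => u * |u| / 2) |x| x := by
  rcases lt_trichotomy x 0 with hx | hx | hx
  · have h : HasDerivAt (fun u : ℝ => -(u^2) / 2) (-x) x := by
      have := ((hasDerivAt_pow 2 x).neg).div_const 2
      simpa using this.congr_deriv (by push_cast; ring)
    rw [abs_of_neg hx]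
    refine h.congr_of_eventuallyEq ?_
    filter_upwards [Iio_mem_nhds hx] with u (hu : u < 0)
    rw [abs_of_neg hu]; ring
  · subst hx
    rw [hasDerivAt_iff_tendsto_slope]
    have h : (slope (fun u : ℝ => u * |u| / 2) 0) =ᶠ[𝓝[≠] (0:ℝ)] fun u => |u| / 2 := by
      filter_upwards [self_mem_nhdsWithin] with u (hu : u ≠ 0)
      rw [slope_def_field]
      field_simp
      ring
    rw [tendsto_congr' h]
    have : Tendsto (fun u : ℝ => |u| / 2) (𝓝 0) (𝓝 (|(0:ℝ)| / 2)) :=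
      (continuous_abs.div_const 2).continuousAt
    simpa using this.mono_left nhdsWithin_le_nhds
  · have h : HasDerivAt (fun u : ℝ => (u^2) / 2) x x := by
      have := (hasDerivAt_pow 2 x).div_const 2
      simpa using this.congr_deriv (by push_cast; ring)
    rw [abs_of_pos hx]
    refine h.congr_of_eventuallyEq ?_
    filter_upwards [Ioi_mem_nhds hx] with u (hu : 0 < u)
    rw [abs_of_pos hu]; ring

lemma integral_abs' (a b : ℝ) : ∫ u in a..b, |u| = b * |b| / 2 - a * |a| / 2 := by
  exact intervalIntegral.integral_eq_sub_of_hasDerivAt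
    (fun x _ => hasDerivAt_half_mul_abs x)
    (continuous_abs.intervalIntegrable a b)

lemma comp_integral : ∫ z, comp z = 1 - M := by
  have hb := b2_pos
  have hL := LL_pos
  have key : ∀ z : ℝ, comp z = (fun u => max 0 (1/16 - b2 * |u|)) (z - x0) := fun z => rfl
  have h1 : ∫ z, comp z = ∫ u, max 0 (1/16 - b2 * |u|) := by
    have : ∀ z : ℝ, comp z = max 0 (1/16 - b2 * |z + -x0|) := by
      intro z; rw [← sub_eq_add_neg]; rfl
    simp_rw [this]
    exact integral_add_right_eq_self (fun u => max 0 (1/16 - b2 * |u|)) (-x0)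
  rw [h1]
  have h2 : ∫ u, max 0 (1/16 - b2 * |u|) = ∫ u in Icc (-LL) LL, max 0 (1/16 - b2 * |u|) := by
    refine (setIntegral_eq_integral_of_forall_compl_eq_zero ?_).symm
    intro u hu
    simp only [mem_Icc, not_and_or, not_le] at hu
    have h3 : LL < |u| := by
      rcases hu with h | h
      · rw [abs_of_neg (by linarith)]; linarith
      · rw [abs_of_pos (by linarith)]; linarith
    have h4 : b2 * LL ≤ b2 * |u| := mul_le_mul_of_nonneg_left h3.le hb.le
    rw [b2_LL] at h4
    rw [max_eq_left (by linarith)]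
  rw [h2]
  have h5 : ∫ u in Icc (-LL) LL, max 0 (1/16 - b2 * |u|) = ∫ u in Icc (-LL) LL, (1/16 - b2 * |u|) := by
    refine setIntegral_congr_fun measurableSet_Icc ?_
    intro u hu
    rw [mem_Icc] at hu
    have h6 : |u| ≤ LL := abs_le.2 ⟨hu.1, hu.2⟩
    have h7 : b2 * |u| ≤ b2 * LL := mul_le_mul_of_nonneg_left h6 hb.le
    rw [b2_LL] at h7
    dsimp only
    rw [max_eq_right (by linarith)]
  rw [h5]
  rw [integral_Icc_eq_integral_Ioc, ← intervalIntegral.integral_of_le (by linarith)]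
  rw [intervalIntegral.integral_sub intervalIntegrable_const
    (show IntervalIntegrable (fun x : ℝ => b2 * |x|) volume (-LL) LL from
      (continuous_const.mul continuous_abs).intervalIntegrable _ _)]
  rw [intervalIntegral.integral_const_mul, integral_abs']
  rw [intervalIntegral.integral_const]
  rw [abs_of_pos hL, abs_of_neg (by linarith)]
  have : b2 * (LL * LL) = LL / 16 := by
    have := b2_LL; nlinarith
  have hLM : LL = 16 * (1 - M) := rfl
  field_simp
  simp only [smul_eq_mul]
  nlinarith

def pp (z : ℝ) : ℝ := ψ z + comp z

lemma pp_cont : Continuous pp := psi_cont.add comp_cont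
lemma pp_integrable : Integrable pp := psi_integrable.add comp_integrable
lemma pp_integral : ∫ z, pp z = 1 := by
  rw [show (fun z => pp z) = (fun z => ψ z + comp z) from rfl]
  rw [integral_add psi_integrable comp_integrable, comp_integral]
  show M + (1 - M) = 1
  ring
lemma pp_nonneg (z : ℝ) : 0 ≤ pp z := add_nonneg (psi_nonneg z) (comp_nonneg z)
lemma pp_le_one (z : ℝ) : pp z ≤ 1 := by
  have := psi_le z; have := comp_le z; unfold pp; linarith



lemma Ioo_subset_S : Ioo (-1:ℝ) 1 ⊆ S := subset_union_left

lemma pp_zero : pp 0 = 1/8 := by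
  have hc : comp 0 = 0 := comp_eq_zero (by norm_num)
  have hd : (1/8 : ℝ) ≤ infDist 0 Sᶜ := by
    apply le_infDist'
    intro y hy
    rw [Real.dist_eq] at hy
    apply Ioo_subset_S
    rw [mem_Ioo]
    constructor <;> [nlinarith [abs_nonneg (0 - y), neg_abs_le (0 - y), le_abs_self (0 - y)];
      nlinarith [neg_abs_le (0 - y), le_abs_self (0 - y)]]
  have hA : A 0 = 1/8 := by simp [A, q]
  have hψ : ψ 0 = 1/8 := by
    rw [ψ, hA]
    rw [min_eq_left]
    nlinarith [infDist_nonneg (s := Sᶜ) (x := (0:ℝ))]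
  simp [pp, hψ, hc]

lemma pp_lt {z : ℝ} (hz : z ≠ 0) : pp z < 1/8 := by
  rcases le_or_gt (-2 : ℝ) z with h | h
  · have hc : comp z = 0 := comp_eq_zero h
    have hq := q_pos hz
    have : ψ z ≤ A z := min_le_left _ _
    have : A z < 1/8 := by unfold A; linarith
    unfold pp
    have := min_le_left (A z) ((1 + z^2) * infDist z Sᶜ)
    show ψ z + comp z < 1/8
    rw [hc]
    have : ψ z ≤ A z := min_le_left _ _
    linarith
  · have hzS : z ∉ S := by
      intro hS
      rcases hS with h1 | h1
      · exact absurd h1.1 (by push_neg; linarith)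
      · rcases mem_iUnion.1 h1 with ⟨ν, hν⟩
        have h2 : (16:ℝ) ≤ mm ν := by have := one_le_pow4 ν; unfold mm; nlinarith
        have h3 := ww_le ν
        have := hν.1
        linarith
    have hψ := psi_eq_zero hzS
    have := comp_le z
    show ψ z + comp z < 1/8
    rw [hψ]
    linarith

lemma key_abs {a b : ℝ} (hab : a ≤ b) : (b - a)^2/2 ≤ b*|b| - a*|a| := by
  rcases le_or_gt 0 a with ha | ha
  · rw [abs_of_nonneg ha, abs_of_nonneg (le_trans ha hab)]
    nlinarith
  · rcases le_or_gt 0 b with hb | hb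
    · rw [abs_of_nonneg hb, abs_of_neg ha]
      nlinarith [sq_nonneg (a+b)]
    · rw [abs_of_neg hb, abs_of_neg ha]
      nlinarith

lemma P_pos (ν : ℕ) : (0:ℝ) < (4:ℝ)^ν := by positivity
lemma rP (ν : ℕ) : rr ν * (4:ℝ)^ν = 1/2 := by
  unfold rr
  rw [div_mul_eq_mul_div, ← mul_pow]
  norm_num
lemma Pe (ν : ℕ) : ((4:ℝ)^ν)^2 * ((1:ℝ)/16)^ν = 1 := by
  rw [← pow_right_comm, show ((4:ℝ)^2) = 16 by norm_num, ← mul_pow]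
  norm_num

lemma window_lower (ν : ℕ) {z : ℝ}
    (hz : z ∈ Ioo (mm ν - rr ν) (mm ν + rr ν)) : 1/8 - rr ν/512 ≤ pp z := by
  set r := rr ν with hrdef
  set P := (4:ℝ)^ν with hPdef
  have hP : (1:ℝ) ≤ P := one_le_pow4 ν
  have hr : 0 < r := rr_pos ν
  have hr2 : r ≤ 1/2 := rr_le ν
  have hrP : r * P = 1/2 := rP ν
  have hm : mm ν = 16 * P := rfl
  have hz15 : 15 * P ≤ z := by
    have := hz.1
    rw [hm] at this
    nlinarith
  have hzpos : 0 < z := by nlinarith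
  -- q bound
  have hq : q z ≤ r / 512 := by
    rw [q, div_le_div_iff₀ (by positivity) (by norm_num)]
    have h3 : (15*P)^3 ≤ z^3 := by
      apply pow_le_pow_left₀ (by positivity) hz15
    have hz4 : z^4 = z^3 * z := by ring
    rw [abs_of_pos hzpos]
    have h6 : 16 * z * P ≤ z^4 := by
      have hP3 : P ≤ P^3 := by
        nlinarith [mul_nonneg (mul_nonneg (show (0:ℝ) ≤ P by linarith)
          (show (0:ℝ) ≤ P - 1 by linarith)) (show (0:ℝ) ≤ P + 1 by linarith)]
      have h5 : 16 * P * z ≤ 3375 * P^3 * z := by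
        apply mul_le_mul_of_nonneg_right _ hzpos.le
        nlinarith
      have h5' : 3375 * P^3 * z ≤ z^3 * z := by
        have := mul_le_mul_of_nonneg_right h3 hzpos.le
        nlinarith
      nlinarith
    have h7 : 64 * r * (16*z*P) ≤ 64 * r * z^4 := by
      apply mul_le_mul_of_nonneg_left h6 (by positivity)
    have h8 : 64 * r * (16*z*P) = 1024 * z * (r*P) := by ring
    rw [h8, hrP] at h7
    nlinarith
  have hA : 1/8 - r/512 ≤ A z := by unfold A; linarith
  -- infDist bound
  have he : ((1:ℝ)/16)^ν ≤ infDist z Sᶜ := by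
    apply le_infDist'
    intro y hy
    rw [Real.dist_eq] at hy
    refine Or.inr (mem_iUnion.2 ⟨ν, ?_⟩)
    have h1 : |z - mm ν| < r := by
      rw [abs_lt]; exact ⟨by linarith [hz.1], by linarith [hz.2]⟩
    have h2 : |y - mm ν| < r + ((1:ℝ)/16)^ν := by
      have := abs_sub_abs_le_abs_sub (y - mm ν) (z - mm ν)
      have h4 : |y - mm ν| ≤ |y - z| + |z - mm ν| := by
        have := abs_sub_le (y) (z) (mm ν)
        simpa using this
      have h5 : |y - z| = |z - y| := abs_sub_comm _ _
      linarith [h4, h5 ▸ hy]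
    rw [mem_Ioo]
    rw [abs_lt] at h2
    unfold ww
    constructor <;> [linarith [h2.1]; linarith [h2.2]]
  have hdist : (1:ℝ)/8 ≤ (1 + z^2) * infDist z Sᶜ := by
    have h1 : (225:ℝ) * P^2 ≤ 1 + z^2 := by nlinarith
    have h2 : (0:ℝ) ≤ infDist z Sᶜ := infDist_nonneg
    have h3 : (225:ℝ) * P^2 * ((1/16:ℝ)^ν) ≤ (1 + z^2) * infDist z Sᶜ := by
      apply mul_le_mul h1 he (by positivity) (by nlinarith)
    have h4 : (225:ℝ) * P^2 * ((1/16:ℝ)^ν) = 225 := by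
      rw [mul_assoc, Pe ν, mul_one]
    linarith
  have : 1/8 - r/512 ≤ ψ z := le_min hA (by linarith)
  have := comp_nonneg z
  show _ ≤ ψ z + comp z
  linarith

lemma window_upper {θ : ℝ} (hθ : θ ∈ Ioo (-(1:ℝ)/2) (1/2)) {r : ℝ} (hr : 0 < r) (hr2 : r ≤ 1/2)
    {z : ℝ} (hz : z ∈ Ioo (θ - r) (θ + r)) : pp z ≤ 1/8 - |z|/128 := by
  have h1 : -1 < z := by have := hz.1; have := hθ.1; linarith
  have h2 : z < 1 := by have := hz.2; have := hθ.2; linarith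
  have hc : comp z = 0 := comp_eq_zero (by linarith)
  have habs : |z| ≤ 1 := abs_le.2 ⟨h1.le, h2.le⟩
  have hq : |z|/128 ≤ q z := by
    rw [q]
    apply div_le_div_of_nonneg_left (abs_nonneg z) (by positivity)
    have hz4 : z^4 ≤ 1 := by
      have : |z|^4 ≤ 1 := pow_le_one₀ (abs_nonneg z) habs
      calc z^4 = |z|^4 := by rw [← abs_pow, abs_of_nonneg (by positivity)]
        _ ≤ 1 := this
    linarith
  have : ψ z ≤ A z := min_le_left _ _
  show ψ z + comp z ≤ _
  rw [hc]
  unfold A at this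
  linarith



lemma lower_int (ν : ℕ) :
    (1/8 - rr ν/512) * (2 * rr ν) ≤ ∫ z in Ioo (mm ν - rr ν) (mm ν + rr ν), pp z := by
  have hr := rr_pos ν
  have h1 : ∫ z in Ioo (mm ν - rr ν) (mm ν + rr ν), (1/8 - rr ν/512 : ℝ) ≤
      ∫ z in Ioo (mm ν - rr ν) (mm ν + rr ν), pp z := by
    apply setIntegral_mono_on
    · exact integrableOn_const (by rw [Real.volume_Ioo]; exact ENNReal.ofReal_ne_top) (by simp)
    · exact pp_integrable.integrableOn
    · exact measurableSet_Ioo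
    · exact fun z hz => window_lower ν hz
  have h2 : ∫ z in Ioo (mm ν - rr ν) (mm ν + rr ν), (1/8 - rr ν/512 : ℝ)
      = (2 * rr ν) * (1/8 - rr ν/512) := by
    rw [setIntegral_const, measureReal_def, Real.volume_Ioo, smul_eq_mul,
      ENNReal.toReal_ofReal (by linarith)]
    ring_nf
  rw [h2] at h1
  linarith

lemma upper_int {θ : ℝ} (hθ : θ ∈ Ioo (-(1:ℝ)/2) (1/2)) (ν : ℕ) :
    ∫ z in Ioo (θ - rr ν) (θ + rr ν), pp z ≤ rr ν/4 - (rr ν)^2/128 := by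
  have hr := rr_pos ν
  have hr2 := rr_le ν
  set r := rr ν with hrdef
  set a := θ - r
  set b := θ + r
  have hab : a ≤ b := by simp only [a, b]; linarith
  have hcont : Continuous (fun z : ℝ => 1/8 - |z|/128) :=
    continuous_const.sub (continuous_abs.div_const 128)
  have h1 : ∫ z in Ioo a b, pp z ≤ ∫ z in Ioo a b, (1/8 - |z|/128) := by
    apply setIntegral_mono_on
    · exact pp_integrable.integrableOn
    · exact (hcont.integrableOn_Ioc).mono_set Ioo_subset_Ioc_self
    · exact measurableSet_Ioo
    · exact fun z hz => window_upper hθ hr hr2 hz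
  have h2 : ∫ z in Ioo a b, (1/8 - |z|/128 : ℝ) = ∫ z in a..b, (1/8 - |z|/128 : ℝ) := by
    rw [intervalIntegral.integral_of_le hab, integral_Ioc_eq_integral_Ioo]
  have h3 : ∫ z in a..b, (1/8 - |z|/128 : ℝ)
      = (b - a)/8 - (b*|b|/2 - a*|a|/2)/128 := by
    have hi1 : IntervalIntegrable (fun z : ℝ => (1/8 : ℝ)) volume a b :=
      intervalIntegrable_const
    have hi2 : IntervalIntegrable (fun z : ℝ => |z|/128) volume a b :=
      (continuous_abs.div_const 128).intervalIntegrable a b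
    rw [intervalIntegral.integral_sub hi1 hi2]
    rw [intervalIntegral.integral_const]
    have : ∫ z in a..b, (|z|/128 : ℝ) = (∫ z in a..b, |z|)/128 :=
      intervalIntegral.integral_div 128 _
    rw [this, integral_abs']
    rw [smul_eq_mul]
    ring
  have hba : b - a = 2 * r := by simp only [a, b]; ring
  have hka := key_abs hab
  rw [h2, h3, hba] at h1
  rw [hba] at hka
  clear_value r a b
  nlinarith [hka, h1]

def cc (ν : ℕ) : ℝ := 2 * (4:ℝ)^ν

lemma cc_inv (ν : ℕ) : 1 / cc ν = rr ν := by
  unfold cc rr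
  have h : ((4:ℝ))^ν ≠ 0 := by positivity
  rw [div_pow, one_pow]
  field_simp

lemma cc_tendsto : Tendsto cc atTop atTop := by
  unfold cc
  exact (tendsto_pow_atTop_atTop_of_one_lt (by norm_num : (1:ℝ) < 4)).const_mul_atTop (by norm_num)

lemma main (ν : ℕ) {θ : ℝ} (hθ : θ ∈ Ioo (-(1:ℝ)/2) (1/2))
    (h : ∫ z in Ioo (mm ν - rr ν) (mm ν + rr ν), pp z ≤
         ∫ z in Ioo (θ - rr ν) (θ + rr ν), pp z) : False := by
  have h1 := lower_int ν
  have h2 := upper_int hθ ν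
  have hr := rr_pos ν
  nlinarith

end Stmt16

theorem stmt16 :
    ∃ π : ℝ → ℝ, Continuous π ∧ (∀ θ, π θ ∈ Set.Icc (0 : ℝ) 1) ∧
      (∫ θ, π θ) = 1 ∧ (∀ θ : ℝ, θ ≠ 0 → π θ < π 0) ∧
      ∃ c : ℕ → ℝ, Tendsto c atTop atTop ∧
        ∀ ν : ℕ, ∀ θ : ℝ,
          (∀ t : ℝ, ∫ z in Set.Ioo (t - 1 / c ν) (t + 1 / c ν), π z ≤
            ∫ z in Set.Ioo (θ - 1 / c ν) (θ + 1 / c ν), π z) →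
          θ ∉ Set.Ioo (-(1 : ℝ) / 2) (1 / 2) := by
  refine ⟨Stmt16.pp, Stmt16.pp_cont,
    fun θ => ⟨Stmt16.pp_nonneg θ, Stmt16.pp_le_one θ⟩, Stmt16.pp_integral,
    fun θ hθ => by rw [Stmt16.pp_zero]; exact Stmt16.pp_lt hθ,
    Stmt16.cc, Stmt16.cc_tendsto, ?_⟩
  intro ν θ hmax hθ
  have h := hmax (Stmt16.mm ν)
  simp only [Stmt16.cc_inv] at h
  exact Stmt16.main ν hθ h
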